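/- Let m ≥ 6 be a multiple of 3. If m − 1 has a witness, then m/3 + R(m/3) = R(m) + 1; if m − 1 has no witness, then m/3 + R(m/3) = R(m) + 2. -/

import Mathlib

/-- The auxiliary sequence: `a 1 = 3`, `a i = 3 * a (i-1) - 1` for `i ≥ 2`. -/
def a : ℕ → ℕ
  | 0 => 0
  | 1 => 3
  | n + 2 => 3 * a (n + 1) - 1

/-- `R(m, i) = max(0, ⌊(m − a i − 1)/3^i⌋)` (truncated ℕ-subtraction gives the max). -/
def Rmi (m i : ℕ) : ℕ := (m - a i - 1) / 3 ^ i

/-- `R(m) = ∑_{i=1}^∞ R(m, i)`; all terms with `i > m` vanish, so a finite sum suffices. -/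
def R (m : ℕ) : ℕ := ∑ i ∈ Finset.Icc 1 m, Rmi m i

/-- `m` has a witness pair `(k, i)` of positive integers with `m = k·3^i + a i`. -/
def HasWitness (m : ℕ) : Prop := ∃ k i : ℕ, 1 ≤ k ∧ 1 ≤ i ∧ m = k * 3 ^ i + a i

/-- `B` is the `B`-sequence: `B 0 = 0`, `B n = n` for `1 ≤ n ≤ 5`, and
`B n = B (n - B (n-1)) + B (n - B (n-2)) + B (n - B (n-3))` for `n ≥ 6`. -/
def IsBSeq (B : ℕ → ℕ) : Prop :=
  B 0 = 0 ∧ (∀ n, 1 ≤ n → n ≤ 5 → B n = n) ∧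
    ∀ n, 6 ≤ n → B n = B (n - B (n - 1)) + B (n - B (n - 2)) + B (n - B (n - 3))

lemma two_a : ∀ i : ℕ, 2 * a (i + 1) = 5 * 3 ^ i + 1 := by
  intro i
  induction i with
  | zero => simp [a]
  | succ j ih =>
    have h : a (j + 1 + 1) = 3 * a (j + 1) - 1 := rfl
    have h3 : (3:ℕ) ^ (j + 1) = 3 * 3 ^ j := by rw [pow_succ]; ring
    have hp : (1:ℕ) ≤ 3 ^ j := Nat.one_le_pow _ _ (by norm_num)
    omega

lemma a_succ (i : ℕ) (hi : 1 ≤ i) : a (i + 1) = 3 * a i - 1 := by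
  obtain ⟨j, rfl⟩ : ∃ j, i = j + 1 := ⟨i - 1, by omega⟩
  rfl

lemma a_ge (i : ℕ) (hi : 1 ≤ i) : 3 ≤ a i := by
  obtain ⟨j, rfl⟩ : ∃ j, i = j + 1 := ⟨i - 1, by omega⟩
  have := two_a j
  have : (1:ℕ) ≤ 3 ^ j := Nat.one_le_pow _ _ (by norm_num)
  omega

lemma a_mono (i j : ℕ) (hi : 1 ≤ i) (hij : i < j) : a i < a j := by
  obtain ⟨i', rfl⟩ : ∃ i', i = i' + 1 := ⟨i - 1, by omega⟩
  obtain ⟨j', rfl⟩ : ∃ j', j = j' + 1 := ⟨j - 1, by omega⟩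
  have h1 := two_a i'
  have h2 := two_a j'
  have := Nat.pow_lt_pow_right (by norm_num : 1 < 3) (show i' < j' by omega)
  omega

/-- `Wit n i`: `i` is a witness index for `n` (decidable form). -/
def Wit (n i : ℕ) : Prop := 3 ^ i ∣ (n - a i) ∧ 1 ≤ n - a i

instance : ∀ n i, Decidable (Wit n i) := fun n i => by unfold Wit; infer_instance

lemma nondiv (i j : ℕ) (hi : 1 ≤ i) (hij : i < j) : ¬ 3 ^ i ∣ (a j - a i) := by
  obtain ⟨i', rfl⟩ : ∃ i', i = i' + 1 := ⟨i - 1, by omega⟩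
  obtain ⟨s, hs, rfl⟩ : ∃ s, 1 ≤ s ∧ j = i' + s + 1 := ⟨j - i' - 1, by omega, by omega⟩
  rintro ⟨c, h⟩
  have h1 := two_a i'
  have h2 := two_a (i' + s)
  have hlt : a (i' + 1) < a (i' + s + 1) := a_mono _ _ (by omega) (by omega)
  have hpadd : (3:ℕ) ^ (i' + s) = 3 ^ i' * 3 ^ s := pow_add 3 i' s
  have h'' : a (i' + s + 1) - a (i' + 1) = 3 * (3 ^ i' * c) := by
    rw [h, pow_succ]; ring
  have key : 5 * (3 ^ i' * 3 ^ s) = 5 * 3 ^ i' + 6 * (3 ^ i' * c) := by omega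
  have e : 3 ^ i' * (5 * 3 ^ s) = 3 ^ i' * (5 + 6 * c) := by
    have t1 : 3 ^ i' * (5 * 3 ^ s) = 5 * (3 ^ i' * 3 ^ s) := by ring
    have t2 : 3 ^ i' * (5 + 6 * c) = 5 * 3 ^ i' + 6 * (3 ^ i' * c) := by ring
    omega
  have hp : 0 < (3:ℕ) ^ i' := Nat.pow_pos (by norm_num)
  have e2 : 5 * 3 ^ s = 5 + 6 * c := Nat.eq_of_mul_eq_mul_left hp e
  obtain ⟨t, ht⟩ : (3:ℕ) ∣ 3 ^ s := dvd_pow_self 3 (by omega)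
  omega

lemma wit_unique (n i j : ℕ) (hi : 1 ≤ i) (hij : i < j) (h1 : Wit n i) (h2 : Wit n j) :
    False := by
  obtain ⟨d1, e1⟩ := h1
  obtain ⟨d2, e2⟩ := h2
  have hij' : a i < a j := a_mono i j hi hij
  have d2' : 3 ^ i ∣ (n - a j) := dvd_trans (pow_dvd_pow 3 hij.le) d2
  have hd' := Nat.dvd_sub d1 d2'
  have heq' : (n - a i) - (n - a j) = a j - a i := by omega
  rw [heq'] at hd'
  exact nondiv i j hi hij hd'

lemma hasWitness_iff (n : ℕ) : HasWitness n ↔ ∃ i ∈ Finset.Icc 1 n, Wit n i := by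
  constructor
  · rintro ⟨k, i, hk, hi, rfl⟩
    have hp : (1:ℕ) ≤ 3 ^ i := Nat.one_le_pow _ _ (by norm_num)
    have hip : i < 3 ^ i := Nat.lt_pow_self (by norm_num)
    have hle : 3 ^ i ≤ k * 3 ^ i := Nat.le_mul_of_pos_left _ hk
    refine ⟨i, Finset.mem_Icc.2 ⟨hi, by omega⟩, ⟨⟨k, by rw [Nat.add_sub_cancel, mul_comm]⟩, by omega⟩⟩
  · rintro ⟨i, hmem, ⟨⟨c, hc⟩, hpos⟩⟩
    obtain ⟨hi1, hin⟩ := Finset.mem_Icc.1 hmem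
    rw [mul_comm] at hc
    rcases Nat.eq_zero_or_pos c with rfl | hcpos
    · omega
    · exact ⟨c, i, hcpos, hi1, by omega⟩

lemma count_wit_pos (n : ℕ) (h : HasWitness n) :
    (∑ i ∈ Finset.Icc 1 n, if Wit n i then 1 else 0) = 1 := by
  rw [← Finset.card_filter]
  obtain ⟨i₀, hmem, hwit⟩ := (hasWitness_iff n).1 h
  have : Finset.filter (fun i => Wit n i) (Finset.Icc 1 n) = {i₀} := by
    apply Finset.eq_singleton_iff_unique_mem.2
    refine ⟨Finset.mem_filter.2 ⟨hmem, hwit⟩, ?_⟩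
    intro j hj
    obtain ⟨hjm, hjw⟩ := Finset.mem_filter.1 hj
    have hj1 := (Finset.mem_Icc.1 hjm).1
    have hi1 := (Finset.mem_Icc.1 hmem).1
    rcases lt_trichotomy j i₀ with h' | h' | h'
    · exact absurd (wit_unique n j i₀ hj1 h' hjw hwit) (by simp)
    · exact h'
    · exact absurd (wit_unique n i₀ j hi1 h' hwit hjw) (by simp)
  rw [this, Finset.card_singleton]

lemma count_wit_neg (n : ℕ) (h : ¬HasWitness n) :
    (∑ i ∈ Finset.Icc 1 n, if Wit n i then 1 else 0) = 0 := by
  rw [← Finset.card_filter, Finset.card_eq_zero]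
  apply Finset.filter_eq_empty_iff.2
  intro i hi hw
  exact h ((hasWitness_iff n).2 ⟨i, hi, hw⟩)

lemma div_pred (x d : ℕ) : x / d = (x - 1) / d + if d ∣ x ∧ 1 ≤ x then 1 else 0 := by
  rcases Nat.eq_zero_or_pos x with rfl | hx
  · simp
  · obtain ⟨y, hy⟩ : ∃ y, x = y + 1 := ⟨x - 1, by omega⟩
    subst hy
    rw [Nat.succ_div]
    simp

lemma sum_shift (f : ℕ → ℕ) (N : ℕ) (hN : 1 ≤ N) :
    ∑ i ∈ Finset.Icc 1 N, f i = f 1 + ∑ i ∈ Finset.Icc 1 (N - 1), f (i + 1) := by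
  have h1 : Finset.Icc 1 N = insert 1 (Finset.Icc 2 N) := by
    ext x; simp only [Finset.mem_Icc, Finset.mem_insert]; omega
  rw [h1, Finset.sum_insert (by simp)]
  congr 1
  have h2 : Finset.Icc 2 N = Finset.map (addRightEmbedding 1) (Finset.Icc 1 (N - 1)) := by
    rw [Finset.map_add_right_Icc]; congr 1; omega
  rw [h2, Finset.sum_map]
  rfl

lemma main_core (n : ℕ) (hn : 2 ≤ n) :
    R (3 * n) = n - 2 + R n + (∑ i ∈ Finset.Icc 1 n, if Wit n i then 1 else 0) := by
  have h6 : 1 ≤ 3 * n := by omega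
  unfold R
  rw [sum_shift _ _ h6]
  have hfirst : Rmi (3 * n) 1 = n - 2 := by
    show (3 * n - 3 - 1) / 3 ^ 1 = n - 2
    simp only [pow_one]
    omega
  have hterm : ∀ i, 1 ≤ i → Rmi (3 * n) (i + 1) = (n - a i) / 3 ^ i := by
    intro i hi
    unfold Rmi
    have hs := a_succ i hi
    have hg := a_ge i hi
    have hsub : 3 * n - a (i + 1) - 1 = 3 * (n - a i) := by omega
    rw [hsub, pow_succ, mul_comm (3 ^ i) 3, Nat.mul_div_mul_left _ _ (by norm_num)]
  have htrunc : ∑ i ∈ Finset.Icc 1 (3 * n - 1), Rmi (3 * n) (i + 1)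
      = ∑ i ∈ Finset.Icc 1 n, Rmi (3 * n) (i + 1) := by
    symm
    apply Finset.sum_subset
    · intro x hx; simp only [Finset.mem_Icc] at *; omega
    · intro x hx hx'
      simp only [Finset.mem_Icc] at hx hx'
      have hx1 : 1 ≤ x := hx.1
      have hxn : n < x := by omega
      rw [hterm x hx1]
      apply Nat.div_eq_of_lt
      calc n - a x ≤ n := Nat.sub_le _ _
        _ < 3 ^ n := Nat.lt_pow_self (by norm_num)
        _ ≤ 3 ^ x := Nat.pow_le_pow_right (by norm_num) hxn.le
  rw [htrunc, hfirst]
  have hsplit : ∑ i ∈ Finset.Icc 1 n, Rmi (3 * n) (i + 1)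
      = ∑ i ∈ Finset.Icc 1 n, (Rmi n i + if Wit n i then 1 else 0) := by
    apply Finset.sum_congr rfl
    intro i hi
    have hi1 := (Finset.mem_Icc.1 hi).1
    rw [hterm i hi1]
    unfold Rmi Wit
    exact div_pred (n - a i) (3 ^ i)
  rw [hsplit, Finset.sum_add_distrib, add_assoc]

lemma witness_shift (n : ℕ) (hn : 2 ≤ n) : HasWitness (3 * n - 1) ↔ HasWitness n := by
  constructor
  · rintro ⟨k, i, hk, hi, heq⟩
    have hi2 : 2 ≤ i := by
      by_contra h
      have hii : i = 1 := by omega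
      subst hii
      simp only [pow_one] at heq
      have ha1 : a 1 = 3 := rfl
      omega
    obtain ⟨j, rfl⟩ : ∃ j, i = j + 2 := ⟨i - 2, by omega⟩
    have hj : 1 ≤ j + 1 := by omega
    have hs : a (j + 2) = 3 * a (j + 1) - 1 := rfl
    have hg := a_ge (j + 1) hj
    have hpow : (3:ℕ) ^ (j + 2) = 3 * 3 ^ (j + 1) := by rw [pow_succ]; ring
    have hmul : k * (3 * 3 ^ (j + 1)) = 3 * (k * 3 ^ (j + 1)) := by ring
    rw [hs, hpow, hmul] at heq
    exact ⟨k, j + 1, hk, hj, by omega⟩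
  · rintro ⟨k, i, hk, hi, rfl⟩
    refine ⟨k, i + 1, hk, by omega, ?_⟩
    have hs := a_succ i hi
    have hg := a_ge i hi
    have hpow : (3:ℕ) ^ (i + 1) = 3 * 3 ^ i := by rw [pow_succ]; ring
    have hmul : k * (3 * 3 ^ i) = 3 * (k * 3 ^ i) := by ring
    rw [hs, hpow, hmul]
    omega

/-- for `m ≥ 6` a multiple of 3: if `m - 1` has a witness then
`m/3 + R(m/3) = R(m) + 1`; if not, then `m/3 + R(m/3) = R(m) + 2`. -/
theorem stmt_5 (m : ℕ) (hm : 6 ≤ m) (h3 : 3 ∣ m) :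
    (HasWitness (m - 1) → m / 3 + R (m / 3) = R m + 1) ∧
    (¬HasWitness (m - 1) → m / 3 + R (m / 3) = R m + 2) := by
  obtain ⟨n, rfl⟩ := h3
  have hn : 2 ≤ n := by omega
  have hdiv : 3 * n / 3 = n := by omega
  rw [hdiv]
  have hmain := main_core n hn
  have hiff := witness_shift n hn
  constructor
  · intro h
    rw [hiff] at h
    rw [count_wit_pos n h] at hmain
    omega
  · intro h
    rw [hiff] at h
    rw [count_wit_neg n h] at hmain
    omega
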